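/- Let n ≥ 2, ε ∈ {0,1} and ℓ ≥ ε be integers. Then the number of (n+1)-tuples m = (m_0, …, m_n) of nonnegative integers with m_0 + 2(m_1 + ⋯ + m_{n−1}) + m_n = ℓ and m_n ≡ ε (mod 2) equals C(n + ⌊(ℓ−ε)/2⌋, n), where C(·,·) is the binomial coefficient. (For ε = 0 this is the number of dominant maximal weights of V(ℓΛ_0) over D_{n+1}^{(2)}, and for ε = 1 that of V((ℓ−1)Λ_0 + Λ_n).) -/

import Mathlib

open Finset

private lemma sum_split_aux {n : ℕ} (hn : 1 ≤ n) (f : Fin (n + 1) → ℕ) :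
    ∑ i, f i = f 0 + f (Fin.last n) + ∑ i ∈ univ \ {0, Fin.last n}, f i := by
  have h01 : (0 : Fin (n + 1)) ≠ Fin.last n := by
    simp only [ne_eq, Fin.ext_iff, Fin.val_zero, Fin.val_last]
    omega
  rw [← Finset.sum_sdiff (Finset.subset_univ {0, Fin.last n}), Finset.sum_pair h01]
  ring

private lemma card_piAntidiag_univ (k L : ℕ) :
    (Finset.piAntidiag (univ : Finset (Fin (k + 1))) L).card = (k + L).choose k := by
  rw [← Finset.map_sym_eq_piAntidiag, Finset.card_map, Finset.sym_univ,
    Finset.card_univ, Sym.card_sym_eq_choose, Fintype.card_fin]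
  have h2 : k + 1 + L - 1 = k + L := by omega
  rw [h2]
  exact Nat.choose_symm_add.symm

/-- **Number of dominant maximal weights in type `D_{n+1}^(2)`.**
For `n ≥ 2`, `ε ∈ {0,1}` and `ℓ ≥ ε`, the number of `(n+1)`-tuples `m` of nonnegative
integers with `m_0 + 2(m_1 + ⋯ + m_{n-1}) + m_n = ℓ` and `m_n ≡ ε (mod 2)` equals
`C(n + ⌊(ℓ-ε)/2⌋, n)`. -/
theorem stmt_15 (n ℓ ε : ℕ) (hn : 2 ≤ n) (hε : ε ≤ 1) (hℓ : ε ≤ ℓ) :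
    (((Fintype.piFinset fun _ : Fin (n + 1) => Finset.range (ℓ + 1)).filter
        (fun m =>
          (∑ i : Fin (n + 1),
            (if (i : ℕ) = 0 ∨ (i : ℕ) = n then 1 else 2) * m i = ℓ)
          ∧ m (Fin.last n) % 2 = ε)).card)
      = Nat.choose (n + (ℓ - ε) / 2) n := by
  classical
  have hn1 : 1 ≤ n := by omega
  set L := (ℓ - ε) / 2 with hL
  set r := (ℓ - ε) % 2 with hr
  have hlr : ℓ = 2 * L + r + ε := by omega
  have hr1 : r ≤ 1 := by omega
  set A : Finset (Fin (n + 1)) := univ \ {0, Fin.last n} with hA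
  have hmemA : ∀ i ∈ A, (i : ℕ) ≠ 0 ∧ (i : ℕ) ≠ n := by
    intro i hi
    simp only [hA, mem_sdiff, mem_univ, mem_insert, mem_singleton, true_and] at hi
    push_neg at hi
    refine ⟨fun h => hi.1 (Fin.ext (by simpa using h)),
      fun h => hi.2 (Fin.ext (by simpa [Fin.val_last] using h))⟩
  -- the bijection
  set Φ : (Fin (n + 1) → ℕ) → (Fin (n + 1) → ℕ) := fun g i =>
    if (i : ℕ) = 0 then 2 * g (Fin.last n) + r
    else if (i : ℕ) = n then 2 * g 0 + ε else g i with hΦ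
  set Ψ : (Fin (n + 1) → ℕ) → (Fin (n + 1) → ℕ) := fun m i =>
    if (i : ℕ) = 0 then m (Fin.last n) / 2
    else if (i : ℕ) = n then m 0 / 2 else m i with hΨ
  have hΦ0 : ∀ g, Φ g 0 = 2 * g (Fin.last n) + r := by
    intro g; simp [hΦ]
  have hΦl : ∀ g, Φ g (Fin.last n) = 2 * g 0 + ε := by
    intro g; simp [hΦ, Fin.val_last]; omega
  have hΦA : ∀ g, ∀ i ∈ A, Φ g i = g i := by
    intro g i hi
    obtain ⟨h1, h2⟩ := hmemA i hi
    simp only [hΦ, h1, h2, ↓reduceIte]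
  have hΨ0 : ∀ m, Ψ m 0 = m (Fin.last n) / 2 := by
    intro m; simp [hΨ]
  have hΨl : ∀ m, Ψ m (Fin.last n) = m 0 / 2 := by
    intro m; simp [hΨ, Fin.val_last]; omega
  have hΨA : ∀ m, ∀ i ∈ A, Ψ m i = m i := by
    intro m i hi
    obtain ⟨h1, h2⟩ := hmemA i hi
    simp only [hΨ, h1, h2, ↓reduceIte]
  -- the weighted sum splits as follows
  have hwsum : ∀ m : Fin (n + 1) → ℕ,
      (∑ i : Fin (n + 1), (if (i : ℕ) = 0 ∨ (i : ℕ) = n then 1 else 2) * m i)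
        = m 0 + m (Fin.last n) + 2 * ∑ i ∈ A, m i := by
    intro m
    rw [sum_split_aux hn1 (fun i => (if (i : ℕ) = 0 ∨ (i : ℕ) = n then 1 else 2) * m i)]
    have t0 : (if ((0 : Fin (n + 1)) : ℕ) = 0 ∨ ((0 : Fin (n + 1)) : ℕ) = n then 1 else 2)
        * m 0 = m 0 := by simp
    have tl : (if ((Fin.last n : Fin (n + 1)) : ℕ) = 0 ∨ ((Fin.last n : Fin (n + 1)) : ℕ) = n
        then 1 else 2) * m (Fin.last n) = m (Fin.last n) := by simp [Fin.val_last]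
    have tA : (∑ i ∈ A, (if (i : ℕ) = 0 ∨ (i : ℕ) = n then 1 else 2) * m i)
        = 2 * ∑ i ∈ A, m i := by
      rw [Finset.mul_sum]
      refine Finset.sum_congr rfl fun i hi => ?_
      obtain ⟨h1, h2⟩ := hmemA i hi
      simp [h1, h2]
    rw [t0, tl, tA]
  have key : (((Fintype.piFinset fun _ : Fin (n + 1) => Finset.range (ℓ + 1)).filter
        (fun m =>
          (∑ i : Fin (n + 1),
            (if (i : ℕ) = 0 ∨ (i : ℕ) = n then 1 else 2) * m i = ℓ)
          ∧ m (Fin.last n) % 2 = ε)).card)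
      = (Finset.piAntidiag (univ : Finset (Fin (n + 1))) L).card := by
    apply Finset.card_bij' (fun m _ => Ψ m) (fun g _ => Φ g)
    · -- Ψ maps into piAntidiag
      intro m hm
      simp only [mem_filter, Fintype.mem_piFinset, mem_range] at hm
      obtain ⟨hbd, hsum, hmod⟩ := hm
      rw [hwsum m] at hsum
      rw [Finset.mem_piAntidiag]
      have hs : ∑ i, Ψ m i = L := by
        rw [sum_split_aux hn1 (Ψ m), hΨ0, hΨl, Finset.sum_congr rfl (hΨA m)]
        have heta : A.sum m = ∑ i ∈ A, m i := rfl
        omega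
      exact ⟨hs, fun i _ => mem_univ i⟩
    · -- Φ maps into the filtered set
      intro g hg
      rw [Finset.mem_piAntidiag] at hg
      obtain ⟨hgsum, -⟩ := hg
      have gle : ∀ i, g i ≤ L := fun i => by
        rw [← hgsum]
        exact Finset.single_le_sum (fun _ _ => Nat.zero_le _) (mem_univ i)
      have hsplit : g 0 + g (Fin.last n) + ∑ i ∈ A, g i = L := by
        rw [← sum_split_aux hn1 g, hgsum]
      simp only [mem_filter, Fintype.mem_piFinset, mem_range]
      refine ⟨?_, ?_, ?_⟩
      · intro i
        by_cases h0 : (i : ℕ) = 0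
        · have : i = 0 := Fin.ext (by simpa using h0)
          rw [this, hΦ0]
          have := gle (Fin.last n); omega
        · by_cases h1 : (i : ℕ) = n
          · have : i = Fin.last n := Fin.ext (by simpa [Fin.val_last] using h1)
            rw [this, hΦl]
            have := gle 0; omega
          · have : Φ g i = g i := by simp only [hΦ, h0, h1, ↓reduceIte]
            rw [this]
            have := gle i; omega
      · rw [hwsum (Φ g), hΦ0, hΦl, Finset.sum_congr rfl (hΦA g)]
        have heta : A.sum g = ∑ i ∈ A, g i := rfl
        omega
      · rw [hΦl]; omega
    · -- Φ ∘ Ψ = id on the filtered set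
      intro m hm
      simp only [mem_filter, Fintype.mem_piFinset, mem_range] at hm
      obtain ⟨hbd, hsum, hmod⟩ := hm
      rw [hwsum m] at hsum
      funext i
      by_cases h0 : (i : ℕ) = 0
      · have hi0 : i = 0 := Fin.ext (by simpa using h0)
        rw [hi0, hΦ0, hΨl]
        omega
      · by_cases h1 : (i : ℕ) = n
        · have hil : i = Fin.last n := Fin.ext (by simpa [Fin.val_last] using h1)
          rw [hil, hΦl, hΨ0]
          omega
        · have e1 : Φ (Ψ m) i = Ψ m i := by simp only [hΦ, h0, h1, ↓reduceIte]
          have e2 : Ψ m i = m i := by simp only [hΨ, h0, h1, ↓reduceIte]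
          rw [e1, e2]
    · -- Ψ ∘ Φ = id
      intro g hg
      funext i
      by_cases h0 : (i : ℕ) = 0
      · have hi0 : i = 0 := Fin.ext (by simpa using h0)
        rw [hi0, hΨ0, hΦl]
        omega
      · by_cases h1 : (i : ℕ) = n
        · have hil : i = Fin.last n := Fin.ext (by simpa [Fin.val_last] using h1)
          rw [hil, hΨl, hΦ0]
          omega
        · have e1 : Ψ (Φ g) i = Φ g i := by simp only [hΨ, h0, h1, ↓reduceIte]
          have e2 : Φ g i = g i := by simp only [hΦ, h0, h1, ↓reduceIte]
          rw [e1, e2]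
  rw [key, card_piAntidiag_univ]
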